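/- arXiv:2005.00886 — 5 statements merged into one kernel-verified Lean document; each statement's English description precedes it below -/
import Mathlib

section
/- Suppose all requests in R have the same type z and every node d satisfies A_d^{z→t} = 0 for all t ≠ z (no cross-type collateral consumption). Then an admission vector y : R → {0,1} extends to an ESP-feasible pair (y,σ) if and only if for every cluster k ∈ K, Σ_{r∈R} τ_{r,k}·y_r ≤ Σ_{d∈D_k} ρ_d^z. Consequently, the ESP optimal value equals the maximum of Σ_{r∈R} v_r·y_r over y : R → {0,1} satisfying Σ_{r∈R} τ_{r,k}·y_r ≤ Σ_{d∈D_k} ρ_d^z for every cluster k. -/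
open Finset

/-- ESP with a single request type `z` and no cross-type collateral
consumption: a binary admission vector `y` extends to an ESP-feasible
allocation iff, in every cluster, the total admitted demand does not exceed
the total type-`z` capacity of the cluster; consequently the ESP optimal
value equals the optimum of the corresponding 0-1 knapsack-type program. -/
theorem esp_single_type_no_coupling
    {K D T R : Type*} [Fintype K] [Fintype D] [Fintype T] [Fintype R]
    [DecidableEq K]
    (cl : D → K) (zr : R → T)
    (A : D → T → T → ℝ) (ρ : D → T → ℝ) (τ : R → K → ℝ) (v : R → ℝ)
    (hρ : ∀ d z, 0 ≤ ρ d z) (hA : ∀ d t z, 0 ≤ A d t z)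
    (hAdiag : ∀ d z, A d z z = 1) (hτ : ∀ r k, 0 ≤ τ r k) (hv : ∀ r, 0 < v r)
    (z : T) (hz : ∀ r, zr r = z)
    (hnc : ∀ d t, t ≠ z → A d z t = 0) :
    (∀ y : R → ℝ, (∀ r, y r = 0 ∨ y r = 1) →
      ((∃ σ : R → D → ℝ,
          (∀ r d, 0 ≤ σ r d) ∧
          (∀ r k, ∑ d ∈ univ.filter (fun d => cl d = k), σ r d = τ r k * y r) ∧
          (∀ t k, ∀ d ∈ univ.filter (fun d => cl d = k),
            ∑ r, A d (zr r) t * σ r d ≤ ρ d t))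
        ↔ (∀ k, ∑ r, τ r k * y r ≤ ∑ d ∈ univ.filter (fun d => cl d = k), ρ d z)))
    ∧
    sSup {u : ℝ | ∃ (y : R → ℝ) (σ : R → D → ℝ),
        (∀ r, y r = 0 ∨ y r = 1) ∧ (∀ r d, 0 ≤ σ r d) ∧
        (∀ r k, ∑ d ∈ univ.filter (fun d => cl d = k), σ r d = τ r k * y r) ∧
        (∀ t k, ∀ d ∈ univ.filter (fun d => cl d = k),
          ∑ r, A d (zr r) t * σ r d ≤ ρ d t) ∧
        u = ∑ r, v r * y r}
      = sSup {u : ℝ | ∃ y : R → ℝ,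
        (∀ r, y r = 0 ∨ y r = 1) ∧
        (∀ k, ∑ r, τ r k * y r ≤ ∑ d ∈ univ.filter (fun d => cl d = k), ρ d z) ∧
        u = ∑ r, v r * y r} := by
  have key : ∀ y : R → ℝ, (∀ r, y r = 0 ∨ y r = 1) →
      ((∃ σ : R → D → ℝ,
          (∀ r d, 0 ≤ σ r d) ∧
          (∀ r k, ∑ d ∈ univ.filter (fun d => cl d = k), σ r d = τ r k * y r) ∧
          (∀ t k, ∀ d ∈ univ.filter (fun d => cl d = k),
            ∑ r, A d (zr r) t * σ r d ≤ ρ d t))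
        ↔ (∀ k, ∑ r, τ r k * y r ≤ ∑ d ∈ univ.filter (fun d => cl d = k), ρ d z)) := by
    intro y hy
    have hy0 : ∀ r, 0 ≤ y r := by
      intro r; rcases hy r with h | h <;> rw [h] <;> norm_num
    constructor
    · rintro ⟨σ, hσ0, hσsum, hσcap⟩ k
      have h1 : ∑ r, τ r k * y r
          = ∑ d ∈ univ.filter (fun d => cl d = k), ∑ r, σ r d := by
        rw [Finset.sum_comm]
        exact Finset.sum_congr rfl fun r _ => (hσsum r k).symm
      rw [h1]
      refine Finset.sum_le_sum fun d hd => ?_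
      have := hσcap z k d hd
      simpa [hz, hAdiag] using this
    · intro hcap
      set C : K → ℝ := fun k => ∑ d ∈ univ.filter (fun d => cl d = k), ρ d z with hC
      have hC0 : ∀ k, 0 ≤ C k := fun k =>
        Finset.sum_nonneg fun d _ => hρ d z
      have hcapC : ∀ k, ∑ r, τ r k * y r ≤ C k := hcap
      refine ⟨fun r d => if C (cl d) = 0 then 0 else τ r (cl d) * y r * ρ d z / C (cl d),
        ?_, ?_, ?_⟩
      · intro r d
        dsimp only
        split
        · exact le_refl 0
        · exact div_nonneg (mul_nonneg (mul_nonneg (hτ _ _) (hy0 _)) (hρ _ _)) (hC0 _)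
      · intro r k
        by_cases h : C k = 0
        · have hzero : τ r k * y r = 0 := by
            have hsum : ∑ r, τ r k * y r ≤ 0 := h ▸ hcapC k
            have := (Finset.sum_eq_zero_iff_of_nonneg
              (fun r _ => mul_nonneg (hτ r k) (hy0 r))).1
              (le_antisymm hsum (Finset.sum_nonneg fun r _ => mul_nonneg (hτ r k) (hy0 r)))
            exact this r (Finset.mem_univ r)
          rw [hzero]
          refine Finset.sum_eq_zero fun d hd => ?_
          have hcl : cl d = k := by simpa using hd
          simp only [hcl, h, if_pos]
        · have heq : ∀ d ∈ univ.filter (fun d => cl d = k),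
              (if C (cl d) = 0 then 0 else τ r (cl d) * y r * ρ d z / C (cl d))
                = τ r k * y r * ρ d z / C k := by
            intro d hd
            have hcl : cl d = k := by simpa using hd
            rw [hcl, if_neg h]
          rw [Finset.sum_congr rfl heq, ← Finset.sum_div, ← Finset.mul_sum]
          have hCk : (∑ d ∈ univ.filter (fun d => cl d = k), ρ d z) = C k := rfl
          rw [hCk]
          field_simp
      · intro t k d hd
        have hcl : cl d = k := by simpa using hd
        by_cases ht : t = z
        · rw [ht]
          by_cases h : C k = 0
          · have hzero : ∑ r, A d (zr r) z *
                (if C (cl d) = 0 then 0 else τ r (cl d) * y r * ρ d z / C (cl d)) = 0 :=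
              Finset.sum_eq_zero fun r _ => by rw [hcl]; simp [h]
            rw [hzero]; exact hρ d z
          · have hCpos : 0 < C k := lt_of_le_of_ne (hC0 k) (Ne.symm h)
            have hsum : ∑ r, A d (zr r) z *
                (if C (cl d) = 0 then 0 else τ r (cl d) * y r * ρ d z / C (cl d))
                = (∑ r, τ r k * y r) * ρ d z / C k := by
              rw [Finset.sum_mul, Finset.sum_div]
              refine Finset.sum_congr rfl fun r _ => ?_
              rw [hz, hAdiag, one_mul, hcl, if_neg h]
            rw [hsum, div_le_iff₀ hCpos]
            calc (∑ r, τ r k * y r) * ρ d z ≤ C k * ρ d z :=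
                  mul_le_mul_of_nonneg_right (hcapC k) (hρ d z)
              _ = ρ d z * C k := mul_comm _ _
        · have hz0 : ∀ r, A d (zr r) t = 0 := fun r => by rw [hz]; exact hnc d t ht
          simp only [hz0, zero_mul, Finset.sum_const_zero]
          exact hρ d t
  refine ⟨key, ?_⟩
  congr 1
  ext u
  simp only [Set.mem_setOf_eq]
  constructor
  · rintro ⟨y, σ, hy, h0, hsum, hcap, hu⟩
    exact ⟨y, hy, (key y hy).1 ⟨σ, h0, hsum, hcap⟩, hu⟩
  · rintro ⟨y, hy, hcap, hu⟩
    obtain ⟨σ, h0, hsum, hcapσ⟩ := (key y hy).2 hcap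
    exact ⟨y, σ, hy, h0, hsum, hcapσ, hu⟩
end

section
/- In the instance of ESP constructed in the proof of Theorem 1 (Theorem 1's reduction), namely with a single cluster k (K = {k}), all requests of the same type z, unit values v_r = 1, and A_d^{z→t} = 0 for all t ≠ z on every node, the ESP optimal value equals the optimal value of the splittable multiple knapsack problem: it equals the maximum cardinality of a subset S ⊆ R with Σ_{r∈S} τ_{r,k} ≤ Σ_{d∈D_k} ρ_d^z; moreover this maximum cardinality is attained by admitting requests greedily in nondecreasing order of demand τ_{r,k}. -/
open Finset

private lemma fin_strictMono_le {m : ℕ} (g : Fin m → ℕ) (hg : StrictMono g) :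
    ∀ k (hk : k < m), k ≤ g ⟨k, hk⟩ := by
  intro k
  induction k with
  | zero => intro hk; exact Nat.zero_le _
  | succ k ih =>
    intro hk
    have h1 : k < m := Nat.lt_of_succ_lt hk
    have h2 : g ⟨k, h1⟩ < g ⟨k + 1, hk⟩ := hg (by simp [Fin.lt_def])
    have := ih h1
    omega

private lemma greedy_min {n M : ℕ} (f : Fin n → ℝ) (hf : ∀ i j : Fin n, i ≤ j → f i ≤ f j)
    (S : Finset (Fin n)) (hS : S.card = M) :
    ∑ i ∈ univ.filter (fun i : Fin n => (i : ℕ) < M), f i ≤ ∑ i ∈ S, f i := by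
  have hMn : M ≤ n := by
    rw [← hS]
    simpa using card_le_card (subset_univ S)
  have himg : univ.filter (fun i : Fin n => (i : ℕ) < M) = univ.image (Fin.castLE hMn) := by
    ext i
    simp only [mem_filter, mem_univ, true_and, mem_image]
    constructor
    · intro hi; exact ⟨⟨i.val, hi⟩, by simp [Fin.ext_iff]⟩
    · rintro ⟨j, rfl⟩; exact j.2
  have hinj : Function.Injective (Fin.castLE hMn) := Fin.strictMono_castLE hMn |>.injective
  let g := S.orderIsoOfFin hS
  have hg : StrictMono fun j : Fin M => (((g j : Fin n)) : ℕ) := by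
    intro a b hab
    have : g a < g b := g.strictMono hab
    exact this
  have hS' : ∑ i ∈ S, f i = ∑ j : Fin M, f (g j) := by
    rw [← Finset.sum_attach S f]
    exact (Fintype.sum_equiv g.toEquiv _ _ (fun j => rfl)).symm
  rw [himg, Finset.sum_image (fun a _ b _ h => hinj h), hS']
  apply Finset.sum_le_sum
  intro j _
  apply hf
  rw [Fin.le_def]
  simpa using fin_strictMono_le _ hg j.val j.2

private lemma filter_lt_card {n M : ℕ} (hMn : M ≤ n) :
    (univ.filter (fun i : Fin n => (i : ℕ) < M)).card = M := by
  have himg : univ.filter (fun i : Fin n => (i : ℕ) < M) = univ.image (Fin.castLE hMn) := by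
    ext i
    simp only [mem_filter, mem_univ, true_and, mem_image]
    constructor
    · intro hi; exact ⟨⟨i.val, hi⟩, by simp [Fin.ext_iff]⟩
    · rintro ⟨j, rfl⟩; exact j.2
  rw [himg, Finset.card_image_of_injective _ (Fin.strictMono_castLE hMn).injective]
  simp

/-- Theorem 1's reduction: with a single cluster, all requests of the same
type `z`, unit values, and no cross-type collateral consumption, the ESP
optimal value equals the splittable multiple knapsack optimum, i.e. the
maximum cardinality `M` of a set of requests whose total demand fits within
the total capacity; moreover admitting requests greedily in nondecreasing
order of demand attains this maximum. -/
theorem esp_reduction_smkp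
    {D T R : Type*} [Fintype D] [Fintype T] [Fintype R] [DecidableEq R]
    (zr : R → T) (A : D → T → T → ℝ) (ρ : D → T → ℝ) (τ : R → ℝ)
    (hρ : ∀ d z, 0 ≤ ρ d z) (hAdiag : ∀ d z, A d z z = 1) (hτ : ∀ r, 0 ≤ τ r)
    (z : T) (hz : ∀ r, zr r = z) (hnc : ∀ d t, t ≠ z → A d z t = 0)
    (M : ℕ)
    (hM : M = sSup {m : ℕ | ∃ S : Finset R, S.card = m ∧ ∑ r ∈ S, τ r ≤ ∑ d, ρ d z}) :
    sSup {u : ℝ | ∃ (y : R → ℝ) (σ : R → D → ℝ),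
        (∀ r, y r = 0 ∨ y r = 1) ∧ (∀ r d, 0 ≤ σ r d) ∧
        (∀ r, ∑ d, σ r d = τ r * y r) ∧
        (∀ t d, ∑ r, A d (zr r) t * σ r d ≤ ρ d t) ∧
        u = ∑ r, (1 : ℝ) * y r} = (M : ℝ)
    ∧ (∀ e : Fin (Fintype.card R) ≃ R,
        (∀ i j : Fin (Fintype.card R), i ≤ j → τ (e i) ≤ τ (e j)) →
        ((univ.filter (fun i : Fin (Fintype.card R) => (i : ℕ) < M)).image (fun i => e i)).card = M ∧
        ∑ r ∈ (univ.filter (fun i : Fin (Fintype.card R) => (i : ℕ) < M)).image (fun i => e i), τ r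
          ≤ ∑ d, ρ d z) := by
  classical
  set C : ℝ := ∑ d, ρ d z with hCdef
  have hC0 : 0 ≤ C := Finset.sum_nonneg fun d _ => hρ d z
  set N : Set ℕ := {m | ∃ S : Finset R, S.card = m ∧ ∑ r ∈ S, τ r ≤ C} with hNdef
  have hbdd : BddAbove N := by
    refine ⟨Fintype.card R, ?_⟩
    rintro m ⟨S, hS, -⟩
    rw [← hS]
    simpa using card_le_card (subset_univ S)
  have h0N : (0 : ℕ) ∈ N := ⟨∅, by simp, by simpa using hC0⟩
  have hMmem : M ∈ N := hM ▸ Nat.sSup_mem ⟨0, h0N⟩ hbdd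
  have hleM : ∀ m ∈ N, m ≤ M := fun m hm => hM ▸ le_csSup hbdd hm
  obtain ⟨S, hScard, hSsum⟩ := hMmem
  have hMn : M ≤ Fintype.card R := by
    rw [← hScard]; simpa using card_le_card (subset_univ S)
  -- the feasible-value set
  set U : Set ℝ := {u : ℝ | ∃ (y : R → ℝ) (σ : R → D → ℝ),
      (∀ r, y r = 0 ∨ y r = 1) ∧ (∀ r d, 0 ≤ σ r d) ∧
      (∀ r, ∑ d, σ r d = τ r * y r) ∧
      (∀ t d, ∑ r, A d (zr r) t * σ r d ≤ ρ d t) ∧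
      u = ∑ r, (1 : ℝ) * y r} with hUdef
  -- (M : ℝ) ∈ U
  have hMU : (M : ℝ) ∈ U := by
    refine ⟨fun r => if r ∈ S then 1 else 0,
      fun r d => (τ r * (if r ∈ S then (1:ℝ) else 0)) * (ρ d z / C), ?_, ?_, ?_, ?_, ?_⟩
    · intro r; by_cases h : r ∈ S <;> simp [h]
    · intro r d
      have h1 : 0 ≤ τ r * (if r ∈ S then (1:ℝ) else 0) := by
        by_cases h : r ∈ S <;> simp [h, hτ r]
      exact mul_nonneg h1 (div_nonneg (hρ d z) hC0)
    · intro r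
      rw [← Finset.mul_sum, ← Finset.sum_div]
      by_cases hC : C = 0
      · have hτ0 : ∀ r ∈ S, τ r = 0 := by
          intro r hr
          have hle : ∑ r ∈ S, τ r ≤ 0 := by rw [hC] at hSsum; exact hSsum
          have := (Finset.sum_eq_zero_iff_of_nonneg (fun r _ => hτ r)).1
            (le_antisymm hle (Finset.sum_nonneg fun r _ => hτ r))
          exact this r hr
        by_cases h : r ∈ S <;> simp [h, hC, hτ0 r]
      · rw [← hCdef, div_self hC, mul_one]
    · intro t d
      simp only [hz]
      by_cases ht : t = z
      · rw [ht]
        simp only [hAdiag, one_mul]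
        have hsum : ∑ r, (τ r * (if r ∈ S then (1:ℝ) else 0)) * (ρ d z / C)
            = (∑ r ∈ S, τ r) * (ρ d z / C) := by
          rw [← Finset.sum_mul]
          congr 1
          simp [mul_ite, Finset.sum_ite_mem]
        rw [hsum]
        by_cases hC : C = 0
        · simp [hC, hρ d z]
        · calc (∑ r ∈ S, τ r) * (ρ d z / C) ≤ C * (ρ d z / C) :=
                mul_le_mul_of_nonneg_right hSsum (div_nonneg (hρ d z) hC0)
            _ = ρ d z := by field_simp
      · simp [hnc d t ht, hρ d t]
    · have : ∑ r, (1:ℝ) * (if r ∈ S then (1:ℝ) else 0) = ∑ r ∈ S, (1:ℝ) := by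
        simp [Finset.sum_ite_mem]
      rw [this]
      simp [hScard]
  -- every element of U is at most M
  have hub : ∀ u ∈ U, u ≤ (M : ℝ) := by
    rintro u ⟨y, σ, hy, hσ, hrow, hcol, hu⟩
    set S' : Finset R := univ.filter (fun r => y r = 1) with hS'
    have hyi : ∀ r, y r = if r ∈ S' then 1 else 0 := by
      intro r
      rcases hy r with h | h <;> simp [hS', h]
    have hsumτ : ∑ r ∈ S', τ r ≤ C := by
      have h1 : ∑ r ∈ S', τ r = ∑ r, τ r * y r := by
        simp only [hyi, mul_ite, mul_one, mul_zero, Finset.sum_ite_mem, univ_inter]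
      rw [h1]
      calc ∑ r, τ r * y r = ∑ r, ∑ d, σ r d := by
            exact Finset.sum_congr rfl fun r _ => (hrow r).symm
        _ = ∑ d, ∑ r, σ r d := Finset.sum_comm
        _ ≤ ∑ d, ρ d z := by
            apply Finset.sum_le_sum
            intro d _
            have := hcol z d
            simpa [hz, hAdiag] using this
    have hcard : S'.card ≤ M := hleM _ ⟨S', rfl, hsumτ⟩
    have hval : u = (S'.card : ℝ) := by
      rw [hu]
      simp only [one_mul, hyi]
      simp [Finset.sum_ite_mem]
    rw [hval]
    exact_mod_cast hcard
  constructor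
  · exact le_antisymm (csSup_le ⟨(M : ℝ), hMU⟩ hub) (le_csSup ⟨(M : ℝ), hub⟩ hMU)
  · intro e he
    have hinj : Function.Injective (fun i : Fin (Fintype.card R) => e i) := e.injective
    constructor
    · rw [Finset.card_image_of_injective _ hinj, filter_lt_card hMn]
    · rw [Finset.sum_image (fun a _ b _ h => hinj h)]
      have hS2 : (S.image e.symm).card = M := by
        rw [Finset.card_image_of_injective _ e.symm.injective, hScard]
      calc ∑ i ∈ univ.filter (fun i : Fin (Fintype.card R) => (i : ℕ) < M), τ (e i)
          ≤ ∑ i ∈ S.image e.symm, τ (e i) := greedy_min _ he _ hS2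
        _ = ∑ r ∈ S, τ r := by
            rw [Finset.sum_image (fun a _ b _ h => e.symm.injective h)]
            simp
        _ ≤ C := hSsum
end

section
/- Fix a cluster k ∈ K and suppose all nodes d ∈ D_k share a common collateral matrix, A_d^{t→z} = A^{t→z} for all t,z ∈ T, and have proportional capacities ρ_d^z = w_d·P^z with weights w_d > 0 summing to 1 over D_k and P^z ≥ 0. Then an admission vector y : R → {0,1} admits a nonnegative allocation σ on the nodes of D_k satisfying the ESP constraints (i) and (ii) for cluster k if and only if Σ_{r∈R} A^{z_r→z}·τ_{r,k}·y_r ≤ P^z for every type z ∈ T; moreover, when this condition holds, the proportional allocation σ_{r,d} = w_d·τ_{r,k}·y_r is feasible. -/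
open Finset

/-- In a cluster `k` whose nodes share a common collateral matrix `A` and
have proportional capacities `ρ d z = w d * P z`, a binary admission vector
`y` admits a feasible allocation on the cluster iff the aggregated collateral
demand of the admitted requests fits within `P z` for every type `z`;
moreover the proportional allocation `σ r d = w d * (τ r k * y r)` is then
feasible. -/
theorem esp_proportional_cluster
    {K D T R : Type*} [Fintype K] [Fintype D] [Fintype T] [Fintype R]
    [DecidableEq K]
    (cl : D → K) (zr : R → T) (τ : R → K → ℝ) (k : K)
    (Anode : D → T → T → ℝ) (A : T → T → ℝ)
    (hAeq : ∀ d, cl d = k → ∀ t z, Anode d t z = A t z)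
    (ρ : D → T → ℝ) (w : D → ℝ) (P : T → ℝ)
    (hw : ∀ d, cl d = k → 0 < w d)
    (hwsum : ∑ d ∈ univ.filter (fun d => cl d = k), w d = 1)
    (hρ : ∀ d, cl d = k → ∀ z, ρ d z = w d * P z)
    (hP : ∀ z, 0 ≤ P z)
    (hτ : ∀ r, 0 ≤ τ r k)
    (y : R → ℝ) (hy : ∀ r, y r = 0 ∨ y r = 1) :
    ((∃ σ : R → D → ℝ,
        (∀ r, ∀ d ∈ univ.filter (fun d => cl d = k), 0 ≤ σ r d) ∧
        (∀ r, ∑ d ∈ univ.filter (fun d => cl d = k), σ r d = τ r k * y r) ∧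
        (∀ z, ∀ d ∈ univ.filter (fun d => cl d = k),
          ∑ r, Anode d (zr r) z * σ r d ≤ ρ d z))
      ↔ (∀ z, ∑ r, A (zr r) z * (τ r k * y r) ≤ P z))
    ∧ ((∀ z, ∑ r, A (zr r) z * (τ r k * y r) ≤ P z) →
        ((∀ r, ∀ d ∈ univ.filter (fun d => cl d = k), 0 ≤ w d * (τ r k * y r)) ∧
         (∀ r, ∑ d ∈ univ.filter (fun d => cl d = k), w d * (τ r k * y r) = τ r k * y r) ∧
         (∀ z, ∀ d ∈ univ.filter (fun d => cl d = k),
           ∑ r, Anode d (zr r) z * (w d * (τ r k * y r)) ≤ ρ d z))) := by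
  have hy0 : ∀ r, 0 ≤ y r := by
    intro r; rcases hy r with h | h <;> rw [h] <;> norm_num
  have part2 : (∀ z, ∑ r, A (zr r) z * (τ r k * y r) ≤ P z) →
      ((∀ r, ∀ d ∈ univ.filter (fun d => cl d = k), 0 ≤ w d * (τ r k * y r)) ∧
       (∀ r, ∑ d ∈ univ.filter (fun d => cl d = k), w d * (τ r k * y r) = τ r k * y r) ∧
       (∀ z, ∀ d ∈ univ.filter (fun d => cl d = k),
         ∑ r, Anode d (zr r) z * (w d * (τ r k * y r)) ≤ ρ d z)) := by
    intro hagg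
    refine ⟨?_, ?_, ?_⟩
    · intro r d hd
      simp only [mem_filter] at hd
      exact mul_nonneg (hw d hd.2).le (mul_nonneg (hτ r) (hy0 r))
    · intro r
      rw [← sum_mul, hwsum, one_mul]
    · intro z d hd
      simp only [mem_filter] at hd
      have hdk := hd.2
      rw [hρ d hdk z]
      calc ∑ r, Anode d (zr r) z * (w d * (τ r k * y r))
          = w d * ∑ r, A (zr r) z * (τ r k * y r) := by
            rw [mul_sum]; congr 1; funext r; rw [hAeq d hdk]; ring
        _ ≤ w d * P z := by
            exact mul_le_mul_of_nonneg_left (hagg z) (hw d hdk).le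
  refine ⟨⟨?_, fun hagg => ⟨fun r d => w d * (τ r k * y r), part2 hagg⟩⟩, part2⟩
  rintro ⟨σ, hpos, hsum, hcap⟩ z
  have key : ∑ d ∈ univ.filter (fun d => cl d = k), ∑ r, Anode d (zr r) z * σ r d
      ≤ ∑ d ∈ univ.filter (fun d => cl d = k), ρ d z :=
    sum_le_sum (fun d hd => hcap z d hd)
  have hrhs : ∑ d ∈ univ.filter (fun d => cl d = k), ρ d z = P z := by
    rw [sum_congr rfl (fun d hd => by
      simp only [mem_filter] at hd; exact hρ d hd.2 z), ← sum_mul, hwsum, one_mul]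
  have hlhs : ∑ d ∈ univ.filter (fun d => cl d = k), ∑ r, Anode d (zr r) z * σ r d
      = ∑ r, A (zr r) z * (τ r k * y r) := by
    rw [Finset.sum_comm]
    refine sum_congr rfl (fun r _ => ?_)
    rw [← hsum r, mul_sum]
    refine sum_congr rfl (fun d hd => ?_)
    simp only [mem_filter] at hd
    rw [hAeq d hd.2]
  rw [hrhs, hlhs] at key
  exact key
end

section
/- (Virtual edge node split lemma, feasibility of V-ESP Step 4.) Let G be a finite nonempty set of edge nodes whose capacities are proportional, ρ_d^z = w_d·P^z with w_d > 0, Σ_{d∈G} w_d = 1 and P^z ≥ 0, and whose collateral coefficients satisfy A_d^{t→z} ≤ Â^{t→z} for all d ∈ G and t,z ∈ T, where Â is the virtual collateral matrix (e.g., the entrywise maximum over G). If a virtual allocation σ̃ : R → ℝ with σ̃ ≥ 0 satisfies the virtual-node capacity constraint Σ_{r∈R} Â^{z_r→z}·σ̃_r ≤ P^z for every type z ∈ T, then the proportional split σ_{r,d} := w_d·σ̃_r satisfies σ ≥ 0, Σ_{d∈G} σ_{r,d} = σ̃_r for every r, and Σ_{r∈R} A_d^{z_r→z}·σ_{r,d}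 ≤ ρ_d^z for every d ∈ G and z ∈ T. -/
open Finset

/-- Virtual edge node split lemma (feasibility of V-ESP Step 4): if a
nonnegative virtual allocation `σt` satisfies the virtual-node capacity
constraints with the virtual collateral matrix `Ahat` (entrywise dominating
the physical matrices), then the proportional split `σ r d = w d * σt r`
over a group `G` of nodes with proportional capacities `ρ d z = w d * P z`
is nonnegative, adds up to `σt`, and satisfies every physical node's
capacity constraints. -/
theorem vesp_virtual_node_split
    {G T R : Type*} [Fintype G] [Fintype T] [Fintype R] [Nonempty G]
    (zr : R → T) (A : G → T → T → ℝ) (Ahat : T → T → ℝ)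
    (ρ : G → T → ℝ) (w : G → ℝ) (P : T → ℝ)
    (hA0 : ∀ d t z, 0 ≤ A d t z) (hAdiag : ∀ d z, A d z z = 1)
    (hw : ∀ d, 0 < w d) (hwsum : ∑ d, w d = 1)
    (hρ : ∀ d z, ρ d z = w d * P z) (hP : ∀ z, 0 ≤ P z)
    (hA : ∀ d t z, A d t z ≤ Ahat t z)
    (σt : R → ℝ) (hσt : ∀ r, 0 ≤ σt r)
    (hcap : ∀ z, ∑ r, Ahat (zr r) z * σt r ≤ P z) :
    (∀ r d, 0 ≤ w d * σt r) ∧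
    (∀ r, ∑ d, w d * σt r = σt r) ∧
    (∀ d z, ∑ r, A d (zr r) z * (w d * σt r) ≤ ρ d z) := by
  refine ⟨fun r d => mul_nonneg (hw d).le (hσt r), fun r => by
    rw [← Finset.sum_mul, hwsum, one_mul], fun d z => ?_⟩
  rw [hρ]
  have : ∑ r, A d (zr r) z * (w d * σt r) = w d * ∑ r, A d (zr r) z * σt r := by
    rw [Finset.mul_sum]; congr 1; ext r; ring
  rw [this]
  refine mul_le_mul_of_nonneg_left ?_ (hw d).le
  calc ∑ r, A d (zr r) z * σt r ≤ ∑ r, Ahat (zr r) z * σt r :=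
        Finset.sum_le_sum fun r _ => mul_le_mul_of_nonneg_right (hA d _ _) (hσt r)
    _ ≤ P z := hcap z
end

section
/- (Per-cluster decomposition of the augmented Lagrangian, justifying the DC-ESP subproblem.) Fix a cluster k₀ ∈ K and suppose y_{r,k₀} ∈ {0,1} for all r ∈ R. Then the augmented Lagrangian decomposes as L(y,λ,ρ) = Σ_{r∈R} c_r·y_{r,k₀} + C, where the constant C does not depend on the variables (y_{r,k₀})_{r∈R}, and the adjusted coefficient is c_r = v_r − Σ_{m∈K, m≠k₀} (λ_{r,k₀,m} − λ_{r,m,k₀}) + 2ρ·Σ_{m∈K, m≠k₀} y_{r,m} − ρ·(|K| − 1). Consequently, maximizing L over cluster k₀'s binary admission variables (with all other clusters' variables and the duals held fixed) is equivalent to maximizing the linear objective Σ_{r∈R} c_r·y_{r,k₀}. -/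
open Finset

/-- The augmented Lagrangian of D-ESP. -/
noncomputable def augLagrangian {K R : Type*} [Fintype K] [Fintype R]
    (v : R → ℝ) (Y : R → K → ℝ) (lam : R → K → K → ℝ) (ρ : ℝ) : ℝ :=
  (∑ k, ∑ r, v r * Y r k)
    - (∑ r, ∑ k, ∑ m, lam r k m * (Y r k - Y r m))
    - (ρ / 2) * (∑ r, ∑ k, ∑ m, (Y r k - Y r m) ^ 2)


lemma dcesp_key {K : Type*} [Fintype K] [DecidableEq K]
    (v ρ : ℝ) (lam : K → K → ℝ) (ν₀ : K) (yr : K → ℝ) (t : ℝ) (ht : t ^ 2 = t) :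
    (∑ k, v * (if k = ν₀ then t else yr k))
      - (∑ k, ∑ m, lam k m * ((if k = ν₀ then t else yr k) - (if m = ν₀ then t else yr m)))
      - ρ / 2 * (∑ k, ∑ m, ((if k = ν₀ then t else yr k) - (if m = ν₀ then t else yr m)) ^ 2)
    = (v - (∑ m ∈ univ.erase ν₀, (lam ν₀ m - lam m ν₀))
        + 2 * ρ * (∑ m ∈ univ.erase ν₀, yr m)
        - ρ * ((Fintype.card K : ℝ) - 1)) * t
      + ((∑ k, v * (if k = ν₀ then 0 else yr k))
        - (∑ k, ∑ m, lam k m * ((if k = ν₀ then (0:ℝ) else yr k) - (if m = ν₀ then 0 else yr m)))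
        - ρ / 2 * (∑ k, ∑ m, ((if k = ν₀ then (0:ℝ) else yr k) - (if m = ν₀ then 0 else yr m)) ^ 2)) := by
  have hmem : ν₀ ∈ (univ : Finset K) := mem_univ _
  have hite : ∀ s : ℝ, (fun k => if k = ν₀ then s else yr k)
      = fun k => (if k = ν₀ then s - yr k else 0) + yr k := by
    intro s; funext k; by_cases h : k = ν₀ <;> simp [h]
  have h1 := congrFun (hite t)
  have h0 := congrFun (hite 0)
  simp only [h1, h0]
  rw [Finset.sum_erase_eq_sub hmem, Finset.sum_erase_eq_sub hmem]
  simp only [add_sub_add_right_eq_sub, sub_sq, mul_sub, sub_mul, mul_add, add_mul,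
    Finset.sum_add_distrib, Finset.sum_sub_distrib, mul_ite, ite_mul, mul_zero, zero_mul,
    Finset.sum_ite_eq, Finset.sum_ite_eq', mem_univ, if_true, Finset.sum_const, card_univ,
    nsmul_eq_mul, mul_pow, ite_pow, zero_pow, pow_two, Finset.sum_ite_irrel, Finset.sum_const_zero]
  rw [show t*t = t from by nlinarith]
  ring_nf
  simp only [← Finset.mul_sum, ← Finset.sum_mul]
  ring


/-- Per-cluster decomposition of the augmented Lagrangian, justifying the
DC-ESP subproblem: with all other clusters' variables and the duals fixed,
the augmented Lagrangian is, for binary admission variables of cluster `k₀`,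
a linear function `Σ_r c_r · u_r + C` with the stated adjusted coefficients
`c_r`; hence maximizing it over cluster `k₀`'s binary variables is equivalent
to maximizing the linear objective. -/
theorem dcesp_per_cluster_decomposition
    {K R : Type*} [Fintype K] [Fintype R] [DecidableEq K]
    (v : R → ℝ) (hv : ∀ r, 0 < v r)
    (lam : R → K → K → ℝ) (ρ : ℝ) (hρ : 0 < ρ)
    (ν₀ : K) (y : R → K → ℝ) (c : R → ℝ)
    (hc : ∀ r, c r = v r - (∑ m ∈ univ.erase ν₀, (lam r ν₀ m - lam r m ν₀))
        + 2 * ρ * (∑ m ∈ univ.erase ν₀, y r m)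
        - ρ * ((Fintype.card K : ℝ) - 1)) :
    (∃ C : ℝ, ∀ u : R → ℝ, (∀ r, u r = 0 ∨ u r = 1) →
      augLagrangian v (fun r k => if k = ν₀ then u r else y r k) lam ρ
        = (∑ r, c r * u r) + C)
    ∧
    (∀ u u' : R → ℝ, (∀ r, u r = 0 ∨ u r = 1) → (∀ r, u' r = 0 ∨ u' r = 1) →
      (augLagrangian v (fun r k => if k = ν₀ then u' r else y r k) lam ρ
        ≤ augLagrangian v (fun r k => if k = ν₀ then u r else y r k) lam ρ
        ↔ (∑ r, c r * u' r) ≤ (∑ r, c r * u r))) := by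
  have hrw : ∀ u : R → ℝ,
      augLagrangian v (fun r k => if k = ν₀ then u r else y r k) lam ρ
      = ∑ r, ((∑ k, v r * (if k = ν₀ then u r else y r k))
          - (∑ k, ∑ m, lam r k m
              * ((if k = ν₀ then u r else y r k) - (if m = ν₀ then u r else y r m)))
          - ρ / 2 * (∑ k, ∑ m,
              ((if k = ν₀ then u r else y r k) - (if m = ν₀ then u r else y r m)) ^ 2)) := by
    intro u
    unfold augLagrangian
    rw [Finset.sum_comm, Finset.mul_sum, ← Finset.sum_sub_distrib, ← Finset.sum_sub_distrib]
  have h1 : ∀ u : R → ℝ, (∀ r, u r = 0 ∨ u r = 1) →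
      augLagrangian v (fun r k => if k = ν₀ then u r else y r k) lam ρ
        = (∑ r, c r * u r)
          + augLagrangian v (fun r k => if k = ν₀ then (0:ℝ) else y r k) lam ρ := by
    intro u hu
    rw [hrw u, show augLagrangian v (fun r k => if k = ν₀ then (0:ℝ) else y r k) lam ρ
        = augLagrangian v (fun r k => if k = ν₀ then (fun _ : R => (0:ℝ)) r else y r k) lam ρ
        from rfl, hrw (fun _ => 0), ← Finset.sum_add_distrib]
    refine Finset.sum_congr rfl fun r _ => ?_
    have ht : (u r) ^ 2 = u r := by rcases hu r with h | h <;> simp [h]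
    rw [hc r]
    exact dcesp_key (v r) ρ (lam r) ν₀ (y r) (u r) ht
  refine ⟨⟨augLagrangian v (fun r k => if k = ν₀ then (0:ℝ) else y r k) lam ρ, h1⟩,
    fun u u' hu hu' => ?_⟩
  rw [h1 u hu, h1 u' hu']
  exact add_le_add_iff_right _
end
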